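/- Let k, ℓ, r be integers with 2 ≤ ℓ ≤ k−1 and ℓ/2 ≤ r < ℓ·(1 − 1/e). Let B be a set of k vertices, let Υ ⊆ B with |Υ| = ℓ, and let F be a fixed forest on vertex set Υ having exactly r edges. Then the number of labelled trees T on vertex set B whose induced subgraph on Υ equals F is at most 3^{2r−ℓ} · 2^{2ℓ−3r} · (k−ℓ)^{k−r−2} · (ℓ+1)^{k−ℓ−1}. -/

import Mathlib

open SimpleGraph Walk

namespace TreeExtAux

variable {V : Type*} {T : SimpleGraph V}

noncomputable def pT (hT : T.IsTree) (ρ v : V) : T.Walk v ρ :=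
  (hT.existsUnique_path v ρ).choose

lemma pT_isPath (hT : T.IsTree) (ρ v : V) : (pT hT ρ v).IsPath :=
  (hT.existsUnique_path v ρ).choose_spec.1

lemma pT_unique (hT : T.IsTree) (ρ v : V) (q : T.Walk v ρ) (hq : q.IsPath) :
    q = pT hT ρ v :=
  (hT.existsUnique_path v ρ).choose_spec.2 q hq

noncomputable def par (hT : T.IsTree) (ρ v : V) : V := (pT hT ρ v).getVert 1

lemma pT_not_nil (hT : T.IsTree) {ρ v : V} (hv : v ≠ ρ) : ¬ (pT hT ρ v).Nil :=
  Walk.not_nil_of_ne hv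

lemma par_adj (hT : T.IsTree) {ρ v : V} (hv : v ≠ ρ) : T.Adj v (par hT ρ v) :=
  Walk.adj_snd (pT_not_nil hT hv)

lemma par_ne (hT : T.IsTree) {ρ v : V} (hv : v ≠ ρ) : par hT ρ v ≠ v :=
  (par_adj hT hv).ne'

lemma pT_par (hT : T.IsTree) {ρ v : V} (hv : v ≠ ρ) :
    pT hT ρ (par hT ρ v) = (pT hT ρ v).tail :=
  ((pT_unique hT ρ _ _ ((pT_isPath hT ρ v).tail))).symm

lemma length_pT_par (hT : T.IsTree) {ρ v : V} (hv : v ≠ ρ) :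
    (pT hT ρ (par hT ρ v)).length + 1 = (pT hT ρ v).length := by
  rw [pT_par hT hv]
  exact Walk.length_tail_add_one (pT_not_nil hT hv)

/-- second vertex of a prefix-to-`x` of the canonical path equals `par`, provided `x ∈ support`,
`x ≠ v`. Actually we prove: `par v = x` or the takeUntil walk has `getVert 1 = par v`. -/
lemma adj_par_cases (hT : T.IsTree) {ρ a b : V} (hab : T.Adj a b) :
    (a ≠ ρ ∧ par hT ρ a = b) ∨ (b ≠ ρ ∧ par hT ρ b = a) := by
  classical
  by_cases hb : b = ρ
  · have hab' : T.Adj a ρ := hb ▸ hab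
    have ha : a ≠ ρ := fun h => by rw [h] at hab'; exact T.irrefl hab'
    left
    refine ⟨ha, ?_⟩
    rw [hb]
    have hpath : (Walk.cons hab' Walk.nil : T.Walk a ρ).IsPath := by
      simp [Walk.isPath_def, hab'.ne]
    have := pT_unique hT ρ a _ hpath
    rw [par, ← this]
    simp [Walk.getVert_cons_succ]
  · by_cases hmem : a ∈ (pT hT ρ b).support
    · right
      refine ⟨hb, ?_⟩
      have htake : ((pT hT ρ b).takeUntil a hmem).IsPath :=
        (pT_isPath hT ρ b).takeUntil hmem
      have hsing : ((pT hT ρ b).takeUntil a hmem) = Walk.cons hab.symm Walk.nil := by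
        have h1 : (⟨(pT hT ρ b).takeUntil a hmem, htake⟩ : T.Path b a) =
            SimpleGraph.Path.singleton hab.symm := hT.IsAcyclic.path_unique _ _
        simpa [SimpleGraph.Path.singleton] using congrArg Subtype.val h1
      have hspec := (pT hT ρ b).take_spec hmem
      rw [par, ← hspec, Walk.getVert_append]
      rw [hsing]
      simp
    · left
      have ha : a ≠ ρ := by
        intro h
        subst h
        exact hmem (Walk.end_mem_support _)
      refine ⟨ha, ?_⟩
      have hpath : (Walk.cons hab (pT hT ρ b)).IsPath :=
        (pT_isPath hT ρ b).cons hmem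
      have := pT_unique hT ρ a _ hpath
      rw [par, ← this]
      simp [Walk.getVert_cons_succ]

lemma adj_iff_par (hT : T.IsTree) (ρ : V) {a b : V} :
    T.Adj a b ↔ (a ≠ ρ ∧ par hT ρ a = b) ∨ (b ≠ ρ ∧ par hT ρ b = a) := by
  constructor
  · exact adj_par_cases hT
  · rintro (⟨ha, rfl⟩ | ⟨hb, rfl⟩)
    · exact par_adj hT ha
    · exact (par_adj hT hb).symm

lemma tree_ext {T' : SimpleGraph V} (hT : T.IsTree) (hT' : T'.IsTree) (ρ : V)
    (h : ∀ v, v ≠ ρ → par hT ρ v = par hT' ρ v) : T = T' := by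
  ext a b
  rw [adj_iff_par hT ρ, adj_iff_par hT' ρ]
  constructor
  · rintro (⟨ha, hp⟩ | ⟨hb, hp⟩)
    · exact Or.inl ⟨ha, (h a ha) ▸ hp⟩
    · exact Or.inr ⟨hb, (h b hb) ▸ hp⟩
  · rintro (⟨ha, hp⟩ | ⟨hb, hp⟩)
    · exact Or.inl ⟨ha, (h a ha).symm ▸ hp⟩
    · exact Or.inr ⟨hb, (h b hb).symm ▸ hp⟩


variable {S : Set V} {F : SimpleGraph S}

lemma adj_transfer (hind : T.induce S = F) {a b : ↥S} :
    F.Adj a b ↔ T.Adj ↑a ↑b := by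
  rw [← hind]; exact comap_adj

/-- the inclusion homomorphism from `F` to `T`. -/
def homF (hind : T.induce S = F) : F →g T where
  toFun := Subtype.val
  map_rel' := fun h => (adj_transfer hind).mp h

/-- canonical choice of an `F`-path between reachable vertices -/
noncomputable def Fp {a b : ↥S} (h : F.Reachable a b) : F.Walk a b :=
  letI : DecidableEq ↥S := Classical.decEq _
  (Classical.choice h).toPath

lemma Fp_isPath {a b : ↥S} (h : F.Reachable a b) : (Fp h).IsPath := by
  letI : DecidableEq ↥S := Classical.decEq _
  unfold Fp
  exact (Classical.choice h).toPath.2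

/-- key structural lemma: if `par w ∉ S` then nothing in the same `F`-component of `w`
other than `w` itself lies on the `T`-path from `w` to the root. -/
lemma support_component (hT : T.IsTree) {ρ : V} (hind : T.induce S = F)
    {w y : ↥S} (htop : par hT ρ ↑w ∉ S) (hreach : F.Reachable w y)
    (hy : (y : V) ∈ (pT hT ρ ↑w).support) : y = w := by
  classical
  by_contra hne
  have hvalne : (y : V) ≠ (w : V) := fun h => hne (Subtype.ext h)
  set P : F.Walk w y := Fp hreach with hP
  have hPpath : P.IsPath := Fp_isPath hreach
  set Q : T.Walk ↑w ↑y := P.map (homF hind) with hQ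
  have hQpath : Q.IsPath := Walk.map_isPath_of_injective Subtype.val_injective hPpath
  set R : T.Walk ↑w ↑y := (pT hT ρ ↑w).takeUntil ↑y hy with hR
  have hRpath : R.IsPath := (pT_isPath hT ρ ↑w).takeUntil hy
  have hRQ : R = Q := by
    have h1 : (⟨R, hRpath⟩ : T.Path ↑w ↑y) = ⟨Q, hQpath⟩ := hT.IsAcyclic.path_unique _ _
    exact congrArg Subtype.val h1
  have hRlen : R.length ≠ 0 := fun h => hvalne (Walk.eq_of_length_eq_zero h).symm
  have hspec := (pT hT ρ ↑w).take_spec hy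
  have hgv : par hT ρ ↑w
      = if 1 < R.length then R.getVert 1 else ((pT hT ρ ↑w).dropUntil ↑y hy).getVert (1 - R.length) := by
    rw [par]
    conv_lhs => rw [← hspec]
    rw [Walk.getVert_append]
  by_cases hlen : 1 < R.length
  · rw [if_pos hlen] at hgv
    apply htop
    rw [hgv, hRQ]
    have : Q.getVert 1 ∈ Q.support :=
      Walk.mem_support_iff_exists_getVert.mpr ⟨1, rfl, by rw [hRQ] at hlen; omega⟩
    rw [show Q.support = P.support.map (homF hind) from Walk.support_map (homF hind) P] at this
    obtain ⟨z, _, hz⟩ := List.mem_map.mp this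
    rw [← hz]; exact z.2
  · have h1 : R.length = 1 := by omega
    rw [if_neg hlen, h1] at hgv
    simp only [Nat.sub_self, Walk.getVert_zero] at hgv
    exact htop (hgv ▸ y.2)
lemma getVert_map {V' : Type*} {G : SimpleGraph V} {G' : SimpleGraph V'} (f : G →g G')
    {u v : V} (p : G.Walk u v) (i : ℕ) : (p.map f).getVert i = f (p.getVert i) := by
  induction p generalizing i with
  | nil => rfl
  | cons h q ih =>
    cases i with
    | zero => simp
    | succ n => simpa using ih n

lemma par_descent (hT : T.IsTree) {ρ : V} (hind : T.induce S = F)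
    {w v : ↥S} (htop : par hT ρ ↑w ∉ S) (P : F.Walk w v) (hP : P.IsPath) (hne : v ≠ w) :
    par hT ρ ↑v = ↑(P.getVert (P.length - 1)) := by
  classical
  have hvalne : (v : V) ≠ (w : V) := fun h => hne (Subtype.ext h)
  set Q : T.Walk ↑w ↑v := P.map (homF hind) with hQdef
  have hQpath : Q.IsPath := Walk.map_isPath_of_injective Subtype.val_injective hP
  have hQlen : Q.length = P.length := Walk.length_map (f := homF hind) P
  have hPlen : P.length ≠ 0 := fun h => hvalne ((Walk.eq_of_length_eq_zero h).symm ▸ rfl)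
  set W : T.Walk ↑v ρ := Q.reverse.append (pT hT ρ ↑w) with hWdef
  have hsupQ : ∀ x ∈ Q.support, ∃ z : ↥S, z ∈ P.support ∧ (z : V) = x := by
    intro x hx
    rw [show Q.support = P.support.map (homF hind) from Walk.support_map (homF hind) P] at hx
    obtain ⟨z, hz, hzx⟩ := List.mem_map.mp hx
    exact ⟨z, hz, hzx⟩
  have hWpath : W.IsPath := by
    rw [Walk.isPath_def, hWdef, Walk.support_append, List.nodup_append]
    refine ⟨(hQpath.reverse).support_nodup, ((pT_isPath hT ρ ↑w).support_nodup).tail, ?_⟩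
    intro x hx1 y hx2 rfl
    rw [Walk.support_reverse, List.mem_reverse] at hx1
    obtain ⟨z, hzP, rfl⟩ := hsupQ x hx1
    have hzw : z = w := by
      refine support_component hT hind htop ?_ ?_
      · exact ((P.takeUntil z hzP).reachable)
      · exact List.mem_of_mem_tail hx2
    subst hzw
    have := (pT_isPath hT ρ ↑z).support_nodup
    rw [Walk.support_eq_cons] at this
    exact (List.nodup_cons.mp this).1 hx2
  have hWeq : pT hT ρ ↑v = W := (pT_unique hT ρ _ W hWpath).symm
  have hrevlen : Q.reverse.length = P.length := by
    rw [Walk.length_reverse, hQlen]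
  rw [par, hWeq, hWdef, Walk.getVert_append, hrevlen]
  by_cases h1 : 1 < P.length
  · rw [if_pos h1, Walk.getVert_reverse, hQlen]
    exact getVert_map (homF hind) P _
  · have h2 : P.length = 1 := by omega
    rw [if_neg h1, h2]
    simp


lemma par_mem_adj (hT : T.IsTree) {ρ : V} (hρ : ρ ∉ S) (hind : T.induce S = F)
    {v : ↥S} (hp : par hT ρ ↑v ∈ S) : F.Adj v ⟨par hT ρ ↑v, hp⟩ :=
  (adj_transfer hind).mpr (par_adj hT (fun h => hρ (h ▸ v.2)))

lemma exists_top (hT : T.IsTree) {ρ : V} (hρ : ρ ∉ S) (hind : T.induce S = F) (v : ↥S) :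
    ∃ w : ↥S, F.Reachable w v ∧ par hT ρ ↑w ∉ S := by
  suffices H : ∀ n, ∀ v : ↥S, (pT hT ρ ↑v).length ≤ n →
      ∃ w : ↥S, F.Reachable w v ∧ par hT ρ ↑w ∉ S from H _ v le_rfl
  intro n
  induction n with
  | zero =>
    intro v hv
    exact absurd ((Walk.eq_of_length_eq_zero (Nat.le_zero.mp hv)) ▸ v.2) hρ
  | succ n ih =>
    intro v hv
    by_cases hp : par hT ρ ↑v ∈ S
    · have hvρ : (v : V) ≠ ρ := fun h => hρ (h ▸ v.2)
      obtain ⟨w, hr, hw⟩ := ih ⟨par hT ρ ↑v, hp⟩ (by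
        show (pT hT ρ (par hT ρ ↑v)).length ≤ n
        have := length_pT_par hT hvρ
        omega)
      exact ⟨w, hr.trans (par_mem_adj hT hρ hind hp).symm.reachable, hw⟩
    · exact ⟨v, Reachable.refl v, hp⟩

lemma top_unique (hT : T.IsTree) {ρ : V} (hind : T.induce S = F) {w w' : ↥S}
    (h : F.Reachable w w') (hw : par hT ρ ↑w ∉ S) (hw' : par hT ρ ↑w' ∉ S) : w = w' := by
  by_contra hne
  have hd := par_descent hT hind hw (Fp h) (Fp_isPath h) (fun hh => hne hh.symm)
  exact hw' (hd ▸ ((Fp h).getVert ((Fp h).length - 1)).2)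

noncomputable def top (hT : T.IsTree) (ρ : V) (hρ : ρ ∉ S) (hind : T.induce S = F)
    (c : F.ConnectedComponent) : ↥S :=
  (exists_top hT hρ hind c.out).choose

lemma top_reach (hT : T.IsTree) (ρ : V) (hρ : ρ ∉ S) (hind : T.induce S = F)
    (c : F.ConnectedComponent) : F.Reachable (top hT ρ hρ hind c) c.out :=
  (exists_top hT hρ hind c.out).choose_spec.1

lemma top_notmem (hT : T.IsTree) (ρ : V) (hρ : ρ ∉ S) (hind : T.induce S = F)
    (c : F.ConnectedComponent) : par hT ρ ↑(top hT ρ hρ hind c) ∉ S :=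
  (exists_top hT hρ hind c.out).choose_spec.2

lemma top_mem (hT : T.IsTree) (ρ : V) (hρ : ρ ∉ S) (hind : T.induce S = F)
    (c : F.ConnectedComponent) : F.connectedComponentMk (top hT ρ hρ hind c) = c := by
  rw [ConnectedComponent.sound (top_reach hT ρ hρ hind c)]
  exact c.out_eq

noncomputable def encode (F : SimpleGraph S) (ρ : V) (hρ : ρ ∉ S)
    (Tp : {T : SimpleGraph V // T.IsTree ∧ T.induce S = F}) :
    (∀ c : F.ConnectedComponent, ↥c.supp) ×
      (F.ConnectedComponent → {x : V // x ∉ S}) ×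
      (∀ u : {x : V // x ∉ S ∧ x ≠ ρ}, {x : V // x ≠ u.1}) :=
  ⟨fun c => ⟨top Tp.2.1 ρ hρ Tp.2.2 c, top_mem Tp.2.1 ρ hρ Tp.2.2 c⟩,
   fun c => ⟨par Tp.2.1 ρ ↑(top Tp.2.1 ρ hρ Tp.2.2 c), top_notmem Tp.2.1 ρ hρ Tp.2.2 c⟩,
   fun u => ⟨par Tp.2.1 ρ u.1, par_ne Tp.2.1 u.2.2⟩⟩

lemma encode_injective (F : SimpleGraph S) (ρ : V) (hρ : ρ ∉ S) :
    Function.Injective (encode (V := V) (S := S) F ρ hρ) := by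
  rintro ⟨T₁, hT₁, hind₁⟩ ⟨T₂, hT₂, hind₂⟩ h
  have h1 := congrArg Prod.fst h
  have h2 := congrArg (fun x => x.2.1) h
  have h3 := congrArg (fun x => x.2.2) h
  simp only [encode] at h1 h2 h3
  apply Subtype.ext
  apply tree_ext hT₁ hT₂ ρ
  intro v hv
  by_cases hvS : v ∈ S
  · set vv : ↥S := ⟨v, hvS⟩ with hvv
    set c := F.connectedComponentMk vv with hc
    have htopeq : top hT₁ ρ hρ hind₁ c = top hT₂ ρ hρ hind₂ c := by
      have := congrFun h1 c
      exact congrArg Subtype.val this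
    have hfeq : par hT₁ ρ ↑(top hT₁ ρ hρ hind₁ c) = par hT₂ ρ ↑(top hT₂ ρ hρ hind₂ c) :=
      congrArg Subtype.val (congrFun h2 c)
    by_cases hvtop : vv = top hT₁ ρ hρ hind₁ c
    · have hv1 : v = ↑(top hT₁ ρ hρ hind₁ c) := congrArg Subtype.val hvtop
      have hv2 : v = ↑(top hT₂ ρ hρ hind₂ c) := congrArg Subtype.val (hvtop.trans htopeq)
      calc par hT₁ ρ v = par hT₁ ρ ↑(top hT₁ ρ hρ hind₁ c) := by rw [← hv1]
        _ = par hT₂ ρ ↑(top hT₂ ρ hρ hind₂ c) := hfeq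
        _ = par hT₂ ρ v := by rw [← hv2]
    · have hmk : F.connectedComponentMk (top hT₁ ρ hρ hind₁ c) = F.connectedComponentMk vv :=
        (top_mem hT₁ ρ hρ hind₁ c).trans hc.symm.symm
      have hreach : F.Reachable (top hT₁ ρ hρ hind₁ c) vv := ConnectedComponent.exact hmk
      have e1 := par_descent hT₁ hind₁ (top_notmem hT₁ ρ hρ hind₁ c)
        (Fp hreach) (Fp_isPath hreach) hvtop
      have hnm : par hT₂ ρ ↑(top hT₁ ρ hρ hind₁ c) ∉ S := by
        rw [htopeq]; exact top_notmem hT₂ ρ hρ hind₂ c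
      have e2 := par_descent hT₂ hind₂ hnm (Fp hreach) (Fp_isPath hreach) hvtop
      exact e1.trans e2.symm
  · exact congrArg Subtype.val (congrFun h3 ⟨v, hvS, hv⟩)


noncomputable def topEquiv (hT : T.IsTree) (ρ : V) (hρ : ρ ∉ S) (hind : T.induce S = F) :
    {v : ↥S // par hT ρ ↑v ∉ S} ≃ F.ConnectedComponent where
  toFun v := F.connectedComponentMk v.1
  invFun c := ⟨top hT ρ hρ hind c, top_notmem hT ρ hρ hind c⟩
  left_inv v := by
    apply Subtype.ext
    apply top_unique hT hind _ (top_notmem hT ρ hρ hind _) v.2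
    exact ConnectedComponent.exact (top_mem hT ρ hρ hind _)
  right_inv c := top_mem hT ρ hρ hind c

noncomputable def nontopEquivEdge (hT : T.IsTree) {ρ : V} (hρ : ρ ∉ S)
    (hind : T.induce S = F) :
    {v : ↥S // par hT ρ ↑v ∈ S} ≃ F.edgeSet := by
  apply Equiv.ofBijective
    (fun v => (⟨s(v.1, ⟨par hT ρ ↑v.1, v.2⟩), (F.mem_edgeSet).mpr (par_mem_adj hT hρ hind v.2)⟩ :
      F.edgeSet))
  constructor
  · rintro ⟨v, hv⟩ ⟨w, hw⟩ hvw
    have h : s(v, (⟨par hT ρ ↑v, hv⟩ : ↥S)) = s(w, (⟨par hT ρ ↑w, hw⟩ : ↥S)) :=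
      congrArg Subtype.val hvw
    rw [Sym2.eq_iff] at h
    rcases h with ⟨h1, _⟩ | ⟨h1, h2⟩
    · exact Subtype.ext h1
    · exfalso
      have hv1 : (v : V) ≠ ρ := fun hh => hρ (hh ▸ v.2)
      have hw1 : (w : V) ≠ ρ := fun hh => hρ (hh ▸ w.2)
      have e1 : par hT ρ ↑v = ↑w := congrArg Subtype.val h2
      have e2 : (v : V) = par hT ρ ↑w := congrArg Subtype.val h1
      have l1 := length_pT_par hT hv1
      have l2 := length_pT_par hT hw1
      rw [e1] at l1
      rw [← e2] at l2
      omega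
  · rintro ⟨e, he⟩
    induction e using Sym2.ind with
    | _ x y =>
      have hadj : F.Adj x y := (F.mem_edgeSet).mp he
      have hT' : T.Adj ↑x ↑y := (adj_transfer hind).mp hadj
      rcases adj_par_cases hT (ρ := ρ) hT' with ⟨hx, hpx⟩ | ⟨hy, hpy⟩
      · refine ⟨⟨x, hpx ▸ y.2⟩, ?_⟩
        apply Subtype.ext
        show s(x, (⟨par hT ρ ↑x, hpx ▸ y.2⟩ : ↥S)) = s(x, y)
        exact Sym2.congr_right.mpr (Subtype.ext hpx)
      · refine ⟨⟨y, hpy ▸ x.2⟩, ?_⟩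
        apply Subtype.ext
        show s(y, (⟨par hT ρ ↑y, hpy ▸ x.2⟩ : ↥S)) = s(x, y)
        rw [Sym2.eq_swap]
        exact Sym2.congr_left.mpr (Subtype.ext hpy)



lemma le_geom (n : ℕ) (hn : 1 ≤ n) : (n : ℝ) ≤ 8/9 * (3/2)^n := by
  induction n with
  | zero => omega
  | succ m ih =>
    rcases Nat.eq_or_lt_of_le hn with h1 | h2
    · rw [← h1]; norm_num
    · have hm : 1 ≤ m := by omega
      rcases Nat.eq_or_lt_of_le hm with hm1 | hm2
      · rw [← hm1]; norm_num
      · have hih := ih hm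
        have h32 : (8:ℝ)/9 * (3/2)^(m+1) = (3/2) * (8/9 * (3/2)^m) := by ring
        rw [h32]
        push_cast
        have hmm : (2:ℝ) ≤ m := by exact_mod_cast hm2
        nlinarith

lemma nat_le_two_pow (t : ℕ) : t ≤ 2^(t-1) := by
  cases t with
  | zero => simp
  | succ m => simpa using Nat.lt_two_pow_self (n := m)

lemma pow_count_bound (ℓ t s : ℕ) (hl : 2 ≤ ℓ) (ht : 1 ≤ t) :
    t^s * (ℓ + t - 1)^(t-1) ≤ t^(s+t-2) * (ℓ+1)^(t-1) := by
  rcases Nat.lt_or_ge t 3 with h3 | h3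
  · interval_cases t
    · simp
    · have e1 : ℓ + 2 - 1 = ℓ + 1 := by omega
      have e2 : s + 2 - 2 = s := by omega
      rw [e1, e2]
  · obtain ⟨u, rfl⟩ : ∃ u, t = u + 3 := ⟨t - 3, by omega⟩
    obtain ⟨a, rfl⟩ : ∃ a, ℓ = a + 2 := ⟨ℓ - 2, by omega⟩
    have key : (a + u + 4)^(u+2) ≤ (u+3)^(u+1) * (a+3)^(u+2) := by
      have h1 : 3*(a+u+4) ≤ (a+3)*(u+4) := by nlinarith [Nat.zero_le (a*u)]
      have step1 : (3*(a+u+4))^(u+2) ≤ ((a+3)*(u+4))^(u+2) := Nat.pow_le_pow_left h1 _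
      have h2 : 2*(u+4) ≤ 3*(u+3) := by omega
      have step2 : (2*(u+4))^(u+2) ≤ (3*(u+3))^(u+2) := Nat.pow_le_pow_left h2 _
      have h4 : (u+3) ≤ 2^(u+2) := by simpa using nat_le_two_pow (u+3)
      -- (u+4)^(u+2) ≤ 3^(u+2) * (u+3)^(u+1)
      have step3 : (u+4)^(u+2) ≤ 3^(u+2) * (u+3)^(u+1) := by
        have c1 : 2^(u+2) * (u+4)^(u+2) ≤ 2^(u+2) * (3^(u+2) * (u+3)^(u+1)) := by
          calc 2^(u+2) * (u+4)^(u+2) = (2*(u+4))^(u+2) := by rw [mul_pow]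
            _ ≤ (3*(u+3))^(u+2) := step2
            _ = 3^(u+2) * ((u+3)^(u+1) * (u+3)) := by rw [mul_pow, ← pow_succ]
            _ ≤ 3^(u+2) * ((u+3)^(u+1) * 2^(u+2)) :=
                Nat.mul_le_mul_left _ (Nat.mul_le_mul_left _ h4)
            _ = 2^(u+2) * (3^(u+2) * (u+3)^(u+1)) := by ring
        exact Nat.le_of_mul_le_mul_left c1 (by positivity)
      have c2 : 3^(u+2) * (a+u+4)^(u+2) ≤ 3^(u+2) * ((u+3)^(u+1) * (a+3)^(u+2)) := by
        calc 3^(u+2) * (a+u+4)^(u+2) = (3*(a+u+4))^(u+2) := by rw [mul_pow]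
          _ ≤ ((a+3)*(u+4))^(u+2) := step1
          _ = (a+3)^(u+2) * (u+4)^(u+2) := by rw [mul_pow]
          _ ≤ (a+3)^(u+2) * (3^(u+2) * (u+3)^(u+1)) := Nat.mul_le_mul_left _ step3
          _ = 3^(u+2) * ((u+3)^(u+1) * (a+3)^(u+2)) := by ring
      exact Nat.le_of_mul_le_mul_left c2 (by positivity)
    have e1 : a + 2 + (u+3) - 1 = a + u + 4 := by omega
    have e2 : (u+3) - 1 = u + 2 := by omega
    have e3 : s + (u+3) - 2 = s + (u+1) := by omega
    have e4 : a + 2 + 1 = a + 3 := by omega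
    rw [e1, e2, e3, e4]
    calc (u+3)^s * (a+u+4)^(u+2) ≤ (u+3)^s * ((u+3)^(u+1) * (a+3)^(u+2)) :=
          Nat.mul_le_mul_left _ key
      _ = (u+3)^(s+(u+1)) * (a+3)^(u+2) := by rw [pow_add]; ring

lemma exp_eq (ℓ r s : ℕ) (h1 : ℓ ≤ 2*r) (h2 : 3*r ≤ 2*ℓ) (hs : r + s = ℓ) :
    (8/9 : ℝ)^s * (3/2 : ℝ)^ℓ = 3^(2*r-ℓ) * 2^(2*ℓ-3*r) := by
  have e1 : (2*r-ℓ) + 2*s = ℓ := by omega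
  have e2 : (2*ℓ-3*r) + ℓ = 3*s := by omega
  have h3 : ((3:ℝ)^(2*r-ℓ) * 3^(2*s)) * (2^(2*ℓ-3*r) * 2^ℓ) = 3^ℓ * 2^(3*s) := by
    rw [← pow_add, ← pow_add, e1, e2]
  have h9 : (8/9:ℝ)^s = 2^(3*s) / 3^(2*s) := by
    rw [show (8:ℝ)/9 = 2^3/3^2 by norm_num, div_pow, ← pow_mul, ← pow_mul,
      Nat.mul_comm 3 s, Nat.mul_comm 2 s]
  have h32 : (3/2:ℝ)^ℓ = 3^ℓ / 2^ℓ := div_pow 3 2 ℓ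
  rw [h9, h32]
  rw [div_mul_div_comm, eq_comm, eq_div_iff (by positivity)]
  nlinarith [h3]

lemma nat_card_sigma {ι : Type*} [Fintype ι] (α : ι → Type*) [∀ i, Finite (α i)] :
    Nat.card (Σ i, α i) = ∑ i, Nat.card (α i) := by
  letI := fun i => Fintype.ofFinite (α i)
  rw [Nat.card_eq_fintype_card, Fintype.card_sigma]
  exact Finset.sum_congr rfl fun i _ => (Nat.card_eq_fintype_card).symm

lemma card_split (α : Type*) [Finite α] (p : α → Prop) :
    Nat.card {x // p x} + Nat.card {x // ¬ p x} = Nat.card α := by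
  classical
  letI := Fintype.ofFinite α
  rw [Nat.card_eq_fintype_card, Nat.card_eq_fintype_card, Nat.card_eq_fintype_card,
    Fintype.card_subtype_compl]
  have := Fintype.card_subtype_le p
  omega


end TreeExtAux

set_option maxHeartbeats 1000000 in
/-- Let `B` be a vertex set of size `k`, `Υ ⊆ B` of size `ℓ`, and `F` a fixed forest on `Υ`
with exactly `r` edges, where `2 ≤ ℓ ≤ k−1` and `ℓ/2 ≤ r < ℓ(1 − 1/e)`. Then the number of
labelled trees on `B` inducing `F` on `Υ` is at most
`3^{2r−ℓ} · 2^{2ℓ−3r} · (k−ℓ)^{k−r−2} · (ℓ+1)^{k−ℓ−1}`. -/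
theorem tree_extension_count_medium_r {B : Type*} [Fintype B] (k ℓ r : ℕ)
    (hB : Fintype.card B = k) (Υ : Finset B) (hΥ : Υ.card = ℓ)
    (hℓ2 : 2 ≤ ℓ) (hℓk : ℓ < k)
    (hr_lo : ℓ ≤ 2 * r) (hr_hi : (r : ℝ) < (ℓ : ℝ) * (1 - 1 / Real.exp 1))
    (F : SimpleGraph (↑Υ : Set B)) (hF : F.IsAcyclic) (hFr : F.edgeSet.ncard = r) :
    (Nat.card {T : SimpleGraph B // T.IsTree ∧ T.induce (↑Υ : Set B) = F} : ℝ) ≤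
      (3 : ℝ) ^ (2 * r - ℓ) * (2 : ℝ) ^ (2 * ℓ - 3 * r) *
        ((k : ℝ) - (ℓ : ℝ)) ^ (k - r - 2) * ((ℓ : ℝ) + 1) ^ (k - ℓ - 1) := by
  classical
  have hkB : ℓ ≤ k := le_of_lt hℓk
  have hklR : (0:ℝ) ≤ (k : ℝ) - (ℓ : ℝ) := by
    rw [sub_nonneg]; exact_mod_cast hkB
  have hRHSnn : (0:ℝ) ≤ (3 : ℝ) ^ (2 * r - ℓ) * (2 : ℝ) ^ (2 * ℓ - 3 * r) *
      ((k : ℝ) - (ℓ : ℝ)) ^ (k - r - 2) * ((ℓ : ℝ) + 1) ^ (k - ℓ - 1) := by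
    apply mul_nonneg (mul_nonneg (mul_nonneg (by positivity) (by positivity))
      (pow_nonneg hklR _)) (by positivity)
  by_cases hne : Nonempty {T : SimpleGraph B // T.IsTree ∧ T.induce (↑Υ : Set B) = F}
  swap
  · haveI := not_nonempty_iff.mp hne
    rw [Nat.card_of_isEmpty]
    simpa using hRHSnn
  obtain ⟨⟨T₀, hT₀, hind₀⟩⟩ := hne
  -- a root outside Υ
  have hcompl : (Υᶜ : Finset B).Nonempty := by
    rw [← Finset.card_pos, Finset.card_compl, hB, hΥ]; omega
  obtain ⟨ρ, hρc⟩ := hcompl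
  have hρ : ρ ∉ (↑Υ : Set B) := by simpa using Finset.mem_compl.mp hρc
  letI : Fintype (F.ConnectedComponent) := Fintype.ofFinite _
  set s := Nat.card (F.ConnectedComponent) with hsdef
  -- cardinalities of building blocks
  have hcardcompl : Nat.card {x : B // x ∉ (↑Υ : Set B)} = k - ℓ := by
    rw [Nat.card_congr (Equiv.subtypeEquivRight (p := fun x : B => x ∉ (↑Υ : Set B))
      (q := fun x : B => x ∈ Υᶜ) (fun x => by simp))]
    rw [Nat.card_eq_fintype_card, Fintype.card_coe, Finset.card_compl, hB, hΥ]
  have hcardD : Nat.card {x : B // x ∉ (↑Υ : Set B) ∧ x ≠ ρ} = k - ℓ - 1 := by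
    rw [Nat.card_congr (Equiv.subtypeEquivRight (p := fun x : B => x ∉ (↑Υ : Set B) ∧ x ≠ ρ)
      (q := fun x : B => x ∈ Υᶜ.erase ρ) (fun x => by simp [Finset.mem_erase, and_comm]))]
    rw [Nat.card_eq_fintype_card, Fintype.card_coe, Finset.card_erase_of_mem hρc,
      Finset.card_compl, hB, hΥ]
  have hcardNe : ∀ u : B, Nat.card {x : B // x ≠ u} = k - 1 := by
    intro u
    rw [Nat.card_eq_fintype_card, Fintype.card_subtype_compl, Fintype.card_subtype_eq, hB]
  -- the injection
  have hinj : Nat.card {T : SimpleGraph B // T.IsTree ∧ T.induce (↑Υ : Set B) = F}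
      ≤ Nat.card ((∀ c : F.ConnectedComponent, ↥c.supp) ×
        ((F.ConnectedComponent → {x : B // x ∉ (↑Υ : Set B)}) ×
        (∀ u : {x : B // x ∉ (↑Υ : Set B) ∧ x ≠ ρ}, {x : B // x ≠ u.1}))) :=
    Nat.card_le_card_of_injective _ (TreeExtAux.encode_injective F ρ hρ)
  -- codomain cardinality
  have hXA : Nat.card (∀ c : F.ConnectedComponent, ↥c.supp)
      = ∏ c : F.ConnectedComponent, Nat.card ↥c.supp := Nat.card_pi
  have hXB : Nat.card (F.ConnectedComponent → {x : B // x ∉ (↑Υ : Set B)}) = (k-ℓ)^s := by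
    rw [Nat.card_fun, hcardcompl]
  have hXC : Nat.card (∀ u : {x : B // x ∉ (↑Υ : Set B) ∧ x ≠ ρ}, {x : B // x ≠ u.1})
      = (k-1)^(k-ℓ-1) := by
    rw [Nat.card_pi, Finset.prod_congr rfl (fun u _ => hcardNe u.1), Finset.prod_const,
      Finset.card_univ, ← Nat.card_eq_fintype_card, hcardD]
  have hX : Nat.card ((∀ c : F.ConnectedComponent, ↥c.supp) ×
        ((F.ConnectedComponent → {x : B // x ∉ (↑Υ : Set B)}) ×
        (∀ u : {x : B // x ∉ (↑Υ : Set B) ∧ x ≠ ρ}, {x : B // x ≠ u.1})))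
      = (∏ c : F.ConnectedComponent, Nat.card ↥c.supp) * ((k-ℓ)^s * (k-1)^(k-ℓ-1)) := by
    rw [Nat.card_prod, Nat.card_prod, hXA, hXB, hXC]
  -- component sizes
  have hsum : ∑ c : F.ConnectedComponent, Nat.card ↥c.supp = ℓ := by
    have h1 : Nat.card ↥(↑Υ : Set B) = ℓ := by
      rw [Nat.card_coe_set_eq, Set.ncard_coe_finset, hΥ]
    have h2 : Nat.card ↥(↑Υ : Set B) = Nat.card (Σ c : F.ConnectedComponent,
        {v : ↥(↑Υ : Set B) // F.connectedComponentMk v = c}) :=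
      (Nat.card_congr (Equiv.sigmaFiberEquiv _)).symm
    rw [TreeExtAux.nat_card_sigma] at h2
    have h3 : ∀ c : F.ConnectedComponent, Nat.card ↥c.supp
        = Nat.card {v : ↥(↑Υ : Set B) // F.connectedComponentMk v = c} := fun c =>
      Nat.card_congr (Equiv.subtypeEquivRight (fun v => c.mem_supp_iff v))
    rw [Finset.sum_congr rfl (fun c _ => h3 c), ← h2, h1]
  have hpos : ∀ c : F.ConnectedComponent, 1 ≤ Nat.card ↥c.supp := by
    intro c
    have hmem : c.out ∈ c.supp := c.out_eq
    haveI : Nonempty ↥c.supp := ⟨⟨c.out, hmem⟩⟩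
    exact Nat.card_pos
  -- r + s = ℓ
  have hsℓ : r + s = ℓ := by
    have hsplit := TreeExtAux.card_split ↥(↑Υ : Set B)
      (fun v => TreeExtAux.par hT₀ ρ ↑v ∈ (↑Υ : Set B))
    have hr1 : Nat.card {v : ↥(↑Υ : Set B) // TreeExtAux.par hT₀ ρ ↑v ∈ (↑Υ : Set B)} = r := by
      rw [Nat.card_congr (TreeExtAux.nontopEquivEdge hT₀ hρ hind₀), Nat.card_coe_set_eq, hFr]
    have hs2 : Nat.card {v : ↥(↑Υ : Set B) // ¬ TreeExtAux.par hT₀ ρ ↑v ∈ (↑Υ : Set B)} = s := by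
      rw [Nat.card_congr (TreeExtAux.topEquiv hT₀ ρ hρ hind₀)]
    have h1 : Nat.card ↥(↑Υ : Set B) = ℓ := by
      rw [Nat.card_coe_set_eq, Set.ncard_coe_finset, hΥ]
    rw [hr1, hs2, h1] at hsplit
    exact hsplit
  have hs1' : 1 ≤ s := by
    haveI : Nonempty (F.ConnectedComponent) := by
      have : (Υ : Set B).Nonempty := by
        rw [Finset.coe_nonempty, ← Finset.card_pos, hΥ]; omega
      obtain ⟨x, hx⟩ := this
      exact ⟨F.connectedComponentMk ⟨x, hx⟩⟩
    exact Nat.card_pos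
  -- 3r ≤ 2ℓ
  have h3r : 3*r ≤ 2*ℓ := by
    have hepos := Real.exp_pos 1
    have he3 : Real.exp 1 < 3 := by
      have := Real.exp_one_lt_d9
      norm_num at this ⊢
      linarith
    have h13 : (1:ℝ)/3 < 1/Real.exp 1 := by
      rw [div_lt_div_iff₀ (by norm_num) hepos]
      linarith
    have hℓpos : (0:ℝ) < (ℓ:ℝ) := by exact_mod_cast (by omega : 0 < ℓ)
    have hr2 : (r:ℝ) < (ℓ:ℝ) * (2/3) := by
      calc (r:ℝ) < (ℓ:ℝ) * (1 - 1/Real.exp 1) := hr_hi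
        _ < (ℓ:ℝ) * (2/3) := by
            apply mul_lt_mul_of_pos_left _ hℓpos
            linarith
    have : (3*r : ℝ) < (2*ℓ : ℝ) := by push_cast; linarith
    exact_mod_cast this.le
  -- the numeric bound on the pure-power part
  have natbound : (k-ℓ)^s * (k-1)^(k-ℓ-1) ≤ (k-ℓ)^(k-r-2) * (ℓ+1)^(k-ℓ-1) := by
    have hb := TreeExtAux.pow_count_bound ℓ (k-ℓ) s hℓ2 (by omega)
    rw [show ℓ + (k-ℓ) - 1 = k-1 by omega, show s + (k-ℓ) - 2 = k-r-2 by omega] at hb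
    exact hb
  -- product bound
  have prodbound : (∏ c : F.ConnectedComponent, (Nat.card ↥c.supp : ℝ))
      ≤ (8/9:ℝ)^s * (3/2)^ℓ := by
    calc ∏ c : F.ConnectedComponent, (Nat.card ↥c.supp : ℝ)
        ≤ ∏ c : F.ConnectedComponent, ((8:ℝ)/9 * (3/2)^(Nat.card ↥c.supp)) :=
          Finset.prod_le_prod (fun c _ => by positivity)
            (fun c _ => TreeExtAux.le_geom _ (hpos c))
      _ = (8/9:ℝ)^(Fintype.card (F.ConnectedComponent))
            * (3/2)^(∑ c : F.ConnectedComponent, Nat.card ↥c.supp) := by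
          rw [Finset.prod_mul_distrib, Finset.prod_const, Finset.card_univ,
            Finset.prod_pow_eq_pow_sum]
      _ = (8/9:ℝ)^s * (3/2)^ℓ := by
          rw [hsum, hsdef, Nat.card_eq_fintype_card]
  -- final chain
  have hcast : ((k-ℓ:ℕ) : ℝ) = (k:ℝ) - (ℓ:ℝ) := by
    push_cast [Nat.cast_sub hkB]; ring
  calc (Nat.card {T : SimpleGraph B // T.IsTree ∧ T.induce (↑Υ : Set B) = F} : ℝ)
      ≤ ((∏ c : F.ConnectedComponent, Nat.card ↥c.supp) * ((k-ℓ)^s * (k-1)^(k-ℓ-1)) : ℕ) := by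
        exact_mod_cast le_trans hinj (le_of_eq hX)
    _ = (∏ c : F.ConnectedComponent, (Nat.card ↥c.supp : ℝ))
          * (((k-ℓ)^s * (k-1)^(k-ℓ-1) : ℕ) : ℝ) := by push_cast; ring
    _ ≤ ((8/9:ℝ)^s * (3/2)^ℓ) * (((k-ℓ)^(k-r-2) * (ℓ+1)^(k-ℓ-1) : ℕ) : ℝ) := by
        apply mul_le_mul prodbound (Nat.cast_le.mpr natbound) (Nat.cast_nonneg _)
          (by positivity)
    _ = (3 : ℝ) ^ (2 * r - ℓ) * (2 : ℝ) ^ (2 * ℓ - 3 * r) *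
        ((k : ℝ) - (ℓ : ℝ)) ^ (k - r - 2) * ((ℓ : ℝ) + 1) ^ (k - ℓ - 1) := by
        rw [TreeExtAux.exp_eq ℓ r s hr_lo h3r hsℓ]
        push_cast [Nat.cast_sub hkB]
        ring
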